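/- For all x, y > 0, α ≥ 0 and β > -1, one has μ(√(xy), β, α) ≤ √(μ(x, β, α) · μ(y, β, α)). -/

import Mathlib

open MeasureTheory Real Set

/-- The Volterra function `μ(x, β, α) = ∫₀^∞ x^(t+α) t^β / (Γ(t+α+1) Γ(β+1)) dt`. -/
noncomputable def volterraMu (x β α : ℝ) : ℝ :=
  ∫ t in Set.Ioi (0 : ℝ),
    x ^ (t + α) * t ^ β / (Real.Gamma (t + α + 1) * Real.Gamma (β + 1))

/-- Lower bound for Gamma: `exp (-(A+1)) * A^(s-1) ≤ Γ s` for `A ≥ 1`, `s ≥ 1`. -/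
lemma gamma_lower (A s : ℝ) (hA : 1 ≤ A) (hs : 1 ≤ s) :
    Real.exp (-(A + 1)) * A ^ (s - 1) ≤ Real.Gamma s := by
  have hs0 : (0:ℝ) < s := lt_of_lt_of_le one_pos hs
  have hA0 : (0:ℝ) < A := lt_of_lt_of_le one_pos hA
  rw [Real.Gamma_eq_integral hs0]
  have hsub : Set.Ioc A (A + 1) ⊆ Set.Ioi (0:ℝ) := fun u hu =>
    lt_trans hA0 hu.1
  have hint : IntegrableOn (fun u : ℝ => Real.exp (-u) * u ^ (s - 1)) (Set.Ioi 0) :=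
    Real.GammaIntegral_convergent hs0
  have h1 : Real.exp (-(A + 1)) * A ^ (s - 1)
      ≤ ∫ u in Set.Ioc A (A + 1), Real.exp (-u) * u ^ (s - 1) := by
    have := setIntegral_mono_on (μ := volume) (s := Set.Ioc A (A + 1))
      (f := fun _ : ℝ => Real.exp (-(A + 1)) * A ^ (s - 1))
      (g := fun u : ℝ => Real.exp (-u) * u ^ (s - 1))
      (integrableOn_const (by simp) enorm_ne_top)
      (hint.mono_set hsub) measurableSet_Ioc ?_
    · calc Real.exp (-(A + 1)) * A ^ (s - 1)
          = (volume (Set.Ioc A (A + 1))).toReal • (Real.exp (-(A + 1)) * A ^ (s - 1)) := by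
            simp [Real.volume_Ioc]
        _ = ∫ _ in Set.Ioc A (A + 1), Real.exp (-(A + 1)) * A ^ (s - 1) := by
            rw [setIntegral_const]
            rfl
        _ ≤ _ := this
    · intro u hu
      have h1 : Real.exp (-(A + 1)) ≤ Real.exp (-u) :=
        Real.exp_le_exp.2 (by linarith [hu.2])
      have h2 : A ^ (s - 1) ≤ u ^ (s - 1) :=
        Real.rpow_le_rpow hA0.le hu.1.le (by linarith)
      exact mul_le_mul h1 h2 (Real.rpow_nonneg hA0.le _) (Real.exp_pos _).le
  refine le_trans h1 (setIntegral_mono_set hint ?_ (HasSubset.Subset.eventuallyLE hsub))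
  filter_upwards [ae_restrict_mem measurableSet_Ioi] with u hu
  exact mul_nonneg (Real.exp_pos _).le (Real.rpow_nonneg (le_of_lt hu) _)

lemma volterra_continuousOn (x α β : ℝ) (hx : 0 < x) (hα : 0 ≤ α) (hβ : -1 < β) :
    ContinuousOn (fun t : ℝ =>
      x ^ (t + α) * t ^ β / (Real.Gamma (t + α + 1) * Real.Gamma (β + 1)))
      (Set.Ioi (0 : ℝ)) := by
  intro t ht
  have ht0 : (0:ℝ) < t := ht
  have h1 : ContinuousAt (fun t : ℝ => x ^ (t + α)) t :=
    (Real.continuousAt_const_rpow hx.ne').comp (continuousAt_id.add continuousAt_const)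
  have h2 : ContinuousAt (fun t : ℝ => t ^ β) t :=
    Real.continuousAt_rpow_const t β (Or.inl ht0.ne')
  have h3 : ContinuousAt (fun t : ℝ => Real.Gamma (t + α + 1)) t := by
    have hg : ContinuousAt Real.Gamma (t + α + 1) := by
      refine (Real.differentiableAt_Gamma (s := t + α + 1) ?_).continuousAt
      intro m hcon
      have h0 : (0:ℝ) < t + α + 1 := by linarith
      rw [hcon] at h0
      have : (0:ℝ) ≤ (m:ℝ) := Nat.cast_nonneg m
      linarith
    have hadd : ContinuousAt (fun u : ℝ => u + α + 1) t := by fun_prop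
    exact ContinuousAt.comp (g := Real.Gamma) (f := fun u : ℝ => u + α + 1) hg hadd
  have hne : Real.Gamma (t + α + 1) * Real.Gamma (β + 1) ≠ 0 := by
    have hg1 : 0 < Real.Gamma (t + α + 1) := Real.Gamma_pos_of_pos (by linarith)
    have hg2 : 0 < Real.Gamma (β + 1) := Real.Gamma_pos_of_pos (by linarith)
    exact ne_of_gt (mul_pos hg1 hg2)
  exact ((h1.mul h2).div (h3.mul continuousAt_const) hne).continuousWithinAt

lemma volterra_integrable (x α β : ℝ) (hx : 0 < x) (hα : 0 ≤ α) (hβ : -1 < β) :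
    IntegrableOn (fun t : ℝ =>
      x ^ (t + α) * t ^ β / (Real.Gamma (t + α + 1) * Real.Gamma (β + 1)))
      (Set.Ioi (0 : ℝ)) := by
  have hβ1 : (0:ℝ) < β + 1 := by linarith
  set A : ℝ := max 1 (Real.exp 2 * x) with hA
  have hA1 : (1:ℝ) ≤ A := le_max_left _ _
  have hA0 : (0:ℝ) < A := lt_of_lt_of_le one_pos hA1
  have hxA : x / A ≤ Real.exp (-2) := by
    rw [div_le_iff₀ hA0]
    have : Real.exp 2 * x ≤ A := le_max_right _ _
    calc x = Real.exp (-2) * (Real.exp 2 * x) := by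
          rw [← mul_assoc, ← Real.exp_add]; simp
      _ ≤ Real.exp (-2) * A := by
          exact mul_le_mul_of_nonneg_left this (Real.exp_pos _).le
  set C : ℝ := Real.exp (A + 1) / Real.Gamma (β + 1) with hC
  have hC0 : 0 < C := div_pos (Real.exp_pos _) (Real.Gamma_pos_of_pos hβ1)
  refine Integrable.mono' (g := fun t : ℝ => C * (Real.exp (-t) * t ^ (β + 1 - 1)))
    ((Real.GammaIntegral_convergent hβ1).const_mul C)
    ((volterra_continuousOn x α β hx hα hβ).aestronglyMeasurable measurableSet_Ioi) ?_
  filter_upwards [ae_restrict_mem measurableSet_Ioi] with t ht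
  have ht0 : (0:ℝ) < t := ht
  have hG1 : 0 < Real.Gamma (t + α + 1) := Real.Gamma_pos_of_pos (by linarith)
  have hG2 : 0 < Real.Gamma (β + 1) := Real.Gamma_pos_of_pos hβ1
  have hNnn : 0 ≤ x ^ (t + α) * t ^ β :=
    mul_nonneg (Real.rpow_nonneg hx.le _) (Real.rpow_nonneg ht0.le _)
  rw [Real.norm_of_nonneg (div_nonneg hNnn (mul_nonneg hG1.le hG2.le))]
  have hgl : Real.exp (-(A + 1)) * A ^ (t + α) ≤ Real.Gamma (t + α + 1) := by
    have h := gamma_lower A (t + α + 1) hA1 (by linarith)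
    have he : t + α + 1 - 1 = t + α := by ring
    rwa [he] at h
  have hxA0 : (0:ℝ) < x / A := div_pos hx hA0
  have hpow : (x / A) ^ (t + α) ≤ Real.exp (-t) := by
    rw [Real.rpow_add hxA0]
    have h1 : (x / A) ^ t ≤ Real.exp (-2) ^ t :=
      Real.rpow_le_rpow hxA0.le hxA ht0.le
    have h2 : (x / A) ^ α ≤ 1 :=
      Real.rpow_le_one hxA0.le (le_trans hxA (by
        rw [Real.exp_le_one_iff]; norm_num)) hα
    calc (x / A) ^ t * (x / A) ^ α ≤ Real.exp (-2) ^ t * 1 :=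
          mul_le_mul h1 h2 (Real.rpow_nonneg hxA0.le _) (Real.rpow_nonneg (Real.exp_pos _).le _)
      _ = Real.exp (-2 * t) := by rw [mul_one, ← Real.exp_mul]
      _ ≤ Real.exp (-t) := Real.exp_le_exp.2 (by linarith)
  have he1 : β + 1 - 1 = β := by ring
  rw [he1]
  calc x ^ (t + α) * t ^ β / (Real.Gamma (t + α + 1) * Real.Gamma (β + 1))
      ≤ x ^ (t + α) * t ^ β / (Real.exp (-(A + 1)) * A ^ (t + α) * Real.Gamma (β + 1)) := by
        gcongr
    _ = Real.exp (A + 1) * ((x / A) ^ (t + α) * t ^ β / Real.Gamma (β + 1)) := by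
        rw [Real.div_rpow hx.le hA0.le, Real.exp_neg]
        have hApow : (0:ℝ) < A ^ (t + α) := Real.rpow_pos_of_pos hA0 _
        field_simp
    _ ≤ Real.exp (A + 1) * (Real.exp (-t) * t ^ β / Real.Gamma (β + 1)) := by
        gcongr
    _ = C * (Real.exp (-t) * t ^ β) := by
        rw [hC]
        field_simp

/-- For all `x, y > 0`, `α ≥ 0` and `β > -1`,
`μ(√(xy), β, α) ≤ √(μ(x, β, α) μ(y, β, α))`. -/
theorem volterraMu_sqrt_inequality (x y α β : ℝ) (hx : 0 < x) (hy : 0 < y)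
    (hα : 0 ≤ α) (hβ : -1 < β) :
    volterraMu (Real.sqrt (x * y)) β α ≤
      Real.sqrt (volterraMu x β α * volterraMu y β α) := by
  have hβ1 : (0:ℝ) < β + 1 := by linarith
  set f : ℝ → ℝ := fun t =>
    Real.sqrt (x ^ (t + α) * t ^ β / (Real.Gamma (t + α + 1) * Real.Gamma (β + 1))) with hf
  set g : ℝ → ℝ := fun t =>
    Real.sqrt (y ^ (t + α) * t ^ β / (Real.Gamma (t + α + 1) * Real.Gamma (β + 1))) with hg
  have hintx := volterra_integrable x α β hx hα hβ
  have hinty := volterra_integrable y α β hy hα hβ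
  have hmf : AEStronglyMeasurable f (volume.restrict (Set.Ioi (0:ℝ))) :=
    ((volterra_continuousOn x α β hx hα hβ).sqrt).aestronglyMeasurable measurableSet_Ioi
  have hmg : AEStronglyMeasurable g (volume.restrict (Set.Ioi (0:ℝ))) :=
    ((volterra_continuousOn y α β hy hα hβ).sqrt).aestronglyMeasurable measurableSet_Ioi
  -- nonnegativity of the integrands on `Ioi 0`
  have key : ∀ z : ℝ, 0 < z → ∀ t ∈ Set.Ioi (0:ℝ),
      0 ≤ z ^ (t + α) * t ^ β / (Real.Gamma (t + α + 1) * Real.Gamma (β + 1)) := by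
    intro z hz t ht
    have ht0 : (0:ℝ) < t := ht
    have hG1 : 0 < Real.Gamma (t + α + 1) := Real.Gamma_pos_of_pos (by linarith)
    have hG2 : 0 < Real.Gamma (β + 1) := Real.Gamma_pos_of_pos hβ1
    exact div_nonneg (mul_nonneg (Real.rpow_nonneg hz.le _) (Real.rpow_nonneg ht0.le _))
      (mul_pos hG1 hG2).le
  -- f² and g² agree a.e. with the Volterra integrands
  have hfsq : ∀ᵐ t ∂(volume.restrict (Set.Ioi (0:ℝ))),
      f t ^ (2:ℝ) = x ^ (t + α) * t ^ β / (Real.Gamma (t + α + 1) * Real.Gamma (β + 1)) := by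
    filter_upwards [ae_restrict_mem measurableSet_Ioi] with t ht
    rw [hf, Real.rpow_two, Real.sq_sqrt (key x hx t ht)]
  have hgsq : ∀ᵐ t ∂(volume.restrict (Set.Ioi (0:ℝ))),
      g t ^ (2:ℝ) = y ^ (t + α) * t ^ β / (Real.Gamma (t + α + 1) * Real.Gamma (β + 1)) := by
    filter_upwards [ae_restrict_mem measurableSet_Ioi] with t ht
    rw [hg, Real.rpow_two, Real.sq_sqrt (key y hy t ht)]
  have hf2 : MemLp f (ENNReal.ofReal 2) (volume.restrict (Set.Ioi (0:ℝ))) := by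
    rw [show ENNReal.ofReal 2 = 2 by norm_num]
    refine (memLp_two_iff_integrable_sq hmf).2 (hintx.congr ?_)
    filter_upwards [hfsq] with t ht
    rw [← ht, Real.rpow_two]
  have hg2 : MemLp g (ENNReal.ofReal 2) (volume.restrict (Set.Ioi (0:ℝ))) := by
    rw [show ENNReal.ofReal 2 = 2 by norm_num]
    refine (memLp_two_iff_integrable_sq hmg).2 (hinty.congr ?_)
    filter_upwards [hgsq] with t ht
    rw [← ht, Real.rpow_two]
  have hconj : Real.HolderConjugate 2 2 := ⟨by norm_num, by norm_num, by norm_num⟩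
  have holder := integral_mul_le_Lp_mul_Lq_of_nonneg hconj
    (Filter.Eventually.of_forall fun t => Real.sqrt_nonneg _)
    (Filter.Eventually.of_forall fun t => Real.sqrt_nonneg _) hf2 hg2
  -- identify the LHS
  have hLHS : volterraMu (Real.sqrt (x * y)) β α
      = ∫ t in Set.Ioi (0:ℝ), f t * g t := by
    rw [volterraMu]
    refine setIntegral_congr_fun measurableSet_Ioi ?_
    intro t ht
    have ht0 : (0:ℝ) < t := ht
    have hG1 : 0 < Real.Gamma (t + α + 1) := Real.Gamma_pos_of_pos (by linarith)
    have hG2 : 0 < Real.Gamma (β + 1) := Real.Gamma_pos_of_pos hβ1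
    set G : ℝ := Real.Gamma (t + α + 1) * Real.Gamma (β + 1) with hG
    have hGpos : 0 < G := mul_pos hG1 hG2
    have hq : 0 ≤ t ^ β / G := div_nonneg (Real.rpow_nonneg ht0.le _) hGpos.le
    have hxy : (0:ℝ) ≤ x * y := (mul_pos hx hy).le
    have hsplit : x ^ (t + α) * t ^ β / G * (y ^ (t + α) * t ^ β / G)
        = (x ^ (t + α) * y ^ (t + α)) * (t ^ β / G) ^ 2 := by ring
    have hxynn : (0:ℝ) ≤ x ^ (t + α) * y ^ (t + α) :=
      mul_nonneg (Real.rpow_nonneg hx.le _) (Real.rpow_nonneg hy.le _)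
    have hsqrt : Real.sqrt ((x * y) ^ (t + α)) = Real.sqrt (x * y) ^ (t + α) := by
      rw [Real.sqrt_eq_rpow, Real.sqrt_eq_rpow, ← Real.rpow_mul hxy, ← Real.rpow_mul hxy]
      ring_nf
    show Real.sqrt (x * y) ^ (t + α) * t ^ β / G = f t * g t
    rw [hf, hg, ← Real.sqrt_mul (key x hx t ht), hsplit, Real.sqrt_mul hxynn,
      Real.sqrt_sq hq, ← Real.mul_rpow hx.le hy.le, hsqrt]
    ring
  -- identify the RHS
  have hμx : volterraMu x β α = ∫ t in Set.Ioi (0:ℝ), f t ^ (2:ℝ) := by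
    rw [volterraMu]; exact (integral_congr_ae hfsq).symm
  have hμy : volterraMu y β α = ∫ t in Set.Ioi (0:ℝ), g t ^ (2:ℝ) := by
    rw [volterraMu]; exact (integral_congr_ae hgsq).symm
  have hμxnn : 0 ≤ volterraMu x β α := by
    rw [volterraMu]; exact setIntegral_nonneg measurableSet_Ioi (key x hx)
  have hμynn : 0 ≤ volterraMu y β α := by
    rw [volterraMu]; exact setIntegral_nonneg measurableSet_Ioi (key y hy)
  calc volterraMu (Real.sqrt (x * y)) β α
      = ∫ t in Set.Ioi (0:ℝ), f t * g t := hLHS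
    _ ≤ (∫ t in Set.Ioi (0:ℝ), f t ^ (2:ℝ)) ^ ((1:ℝ)/2)
        * (∫ t in Set.Ioi (0:ℝ), g t ^ (2:ℝ)) ^ ((1:ℝ)/2) := holder
    _ = Real.sqrt (volterraMu x β α) * Real.sqrt (volterraMu y β α) := by
        rw [← hμx, ← hμy, Real.sqrt_eq_rpow, Real.sqrt_eq_rpow]
    _ = Real.sqrt (volterraMu x β α * volterraMu y β α) :=
        (Real.sqrt_mul hμxnn _).symm
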